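/- arXiv:1507.01362 — 2 statements merged into one kernel-verified Lean document; each statement's English description precedes it below -/
import Mathlib

section
/- Define c₁†, c₂† : ℕ³ → ℤ[q] by c₁†(k22,k21,k11) = q^{2n} c₂†(k22-1,k21,k11) + q^{2n} c₁†(k22,k21-1,k11) + c₁†(k22,k21,k11-1) and c₂†(k22,k21,k11) = c₂†(k22-1,k21,k11) + c₁†(k22,k21-1,k11) + c₁†(k22,k21,k11-1), where n = k22+k21+k11, with c† = 0 on negative arguments and c†(0,0,0)=1. Then c₂†(k22,k21,k11) = q^{k21(k21-1)} · qmultinomial(k22+k21+k11; k22,k21,k11)_{q²}. -/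
open Polynomial

/-- Gaussian binomial coefficient in `ℤ[q]`, via the `q`-Pascal recurrence;
equals `(q)_n / ((q)_k (q)_{n-k})`. -/
noncomputable def qbinom : ℕ → ℕ → Polynomial ℤ
  | _, 0 => 1
  | 0, _ + 1 => 0
  | n + 1, k + 1 => qbinom n k + X ^ (k + 1) * qbinom n (k + 1)

/-- Gaussian multinomial coefficient `(a+b+c; a,b,c)_q = (q)_{a+b+c}/((q)_a(q)_b(q)_c)`. -/
noncomputable def qmult (a b c : ℕ) : Polynomial ℤ :=
  qbinom (a + b + c) a * qbinom (b + c) b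

/-! ### Auxiliary development: q-factorials -/

noncomputable def qf : ℕ → Polynomial ℤ
  | 0 => 1
  | n + 1 => (X ^ (n+1) - 1) * qf n

lemma qf_ne_zero (n : ℕ) : qf n ≠ 0 := by
  induction n with
  | zero => exact one_ne_zero
  | succ n ih =>
    refine mul_ne_zero ?_ ih
    simpa using X_pow_sub_C_ne_zero (Nat.succ_pos n) (1 : ℤ)

lemma qbinom_zero_of_lt : ∀ n k : ℕ, n < k → qbinom n k = 0 := by
  intro n
  induction n with
  | zero =>
    intro k hk
    obtain ⟨k', rfl⟩ : ∃ k', k = k' + 1 := ⟨k - 1, by omega⟩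
    rfl
  | succ n ih =>
    intro k hk
    obtain ⟨k', rfl⟩ : ∃ k', k = k' + 1 := ⟨k - 1, by omega⟩
    show qbinom n k' + X ^ (k' + 1) * qbinom n (k' + 1) = 0
    rw [ih k' (by omega), ih (k'+1) (by omega)]
    ring

lemma qbinom_self : ∀ n : ℕ, qbinom n n = 1 := by
  intro n
  induction n with
  | zero => rfl
  | succ n ih =>
    show qbinom n n + X ^ (n + 1) * qbinom n (n + 1) = 1
    rw [ih, qbinom_zero_of_lt n (n+1) (by omega)]
    ring

lemma qbinom_mul_qf_aux : ∀ N k m : ℕ, k + m ≤ N →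
    qbinom (k + m) k * (qf k * qf m) = qf (k + m) := by
  intro N
  induction N with
  | zero =>
    intro k m h
    obtain ⟨rfl, rfl⟩ : k = 0 ∧ m = 0 := by omega
    simp [qbinom, qf]
  | succ N ih =>
    intro k m h
    match k, m with
    | 0, m => simp [qbinom, qf]
    | k+1, 0 => simp [qbinom_self, qf]
    | k+1, m+1 =>
      have d : qbinom ((k+1)+(m+1)) (k+1)
          = qbinom (k+(m+1)) k + X ^ (k+1) * qbinom (k+(m+1)) (k+1) := by
        rw [show (k+1)+(m+1) = (k+(m+1))+1 from by omega]
        rfl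
      have i1 := ih k (m+1) (by omega)
      have i2 := ih (k+1) m (by omega)
      rw [show (k+1)+m = k+(m+1) from by omega] at i2
      have ek : qf (k+1) = (X ^ (k+1) - 1) * qf k := rfl
      have em : qf (m+1) = (X ^ (m+1) - 1) * qf m := rfl
      have etop : qf ((k+1)+(m+1)) = (X ^ ((k+(m+1))+1) - 1) * qf (k+(m+1)) := by
        rw [show (k+1)+(m+1) = (k+(m+1))+1 from by omega]
        rfl
      rw [em] at i1
      rw [ek] at i2
      rw [d, ek, em, etop]
      linear_combination (X ^ (k+1) - 1) * i1 + X ^ (k+1) * (X ^ (m+1) - 1) * i2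

lemma qbinom_mul_qf (k m : ℕ) : qbinom (k + m) k * (qf k * qf m) = qf (k + m) :=
  qbinom_mul_qf_aux (k+m) k m le_rfl

lemma qmult_mul_qf (a b c : ℕ) :
    qmult a b c * (qf a * qf b * qf c) = qf (a + b + c) := by
  have h1 := qbinom_mul_qf b c
  have h2 := qbinom_mul_qf a (b + c)
  rw [show a + (b+c) = a + b + c from by omega] at h2
  unfold qmult
  linear_combination (qbinom (a+b+c) a * qf a) * h1 + h2

/-- `qmult` extended to integer arguments, zero on negatives. -/
noncomputable def qm' (a b c : ℤ) : Polynomial ℤ :=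
  if 0 ≤ a ∧ 0 ≤ b ∧ 0 ≤ c then qmult a.toNat b.toNat c.toNat else 0

lemma qm'_coe (a b c : ℕ) : qm' a b c = qmult a b c := by
  simp [qm']

lemma shiftA (a b c : ℕ) :
    qm' ((a : ℤ) - 1) b c * (qf a * qf b * qf c) = (X ^ a - 1) * qf (a + b + c - 1) := by
  rcases a with _ | a
  · have h1 : ((0:ℕ) : ℤ) - 1 = -1 := by norm_num
    rw [h1]
    have h2 : qm' (-1) b c = 0 := by simp [qm']
    rw [h2]
    simp
  · have h1 : ((a+1:ℕ) : ℤ) - 1 = (a : ℤ) := by push_cast; ring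
    rw [h1, qm'_coe, show (a+1) + b + c - 1 = a + b + c from by omega]
    have e : qf (a+1) = (X ^ (a+1) - 1) * qf a := rfl
    rw [e]
    linear_combination (X ^ (a+1) - 1) * qmult_mul_qf a b c

lemma shiftB (a b c : ℕ) :
    qm' a ((b : ℤ) - 1) c * (qf a * qf b * qf c) = (X ^ b - 1) * qf (a + b + c - 1) := by
  rcases b with _ | b
  · have h1 : ((0:ℕ) : ℤ) - 1 = -1 := by norm_num
    rw [h1]
    have h2 : qm' a (-1) c = 0 := by simp [qm']
    rw [h2]
    simp
  · have h1 : ((b+1:ℕ) : ℤ) - 1 = (b : ℤ) := by push_cast; ring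
    rw [h1, qm'_coe, show a + (b+1) + c - 1 = a + b + c from by omega]
    have e : qf (b+1) = (X ^ (b+1) - 1) * qf b := rfl
    rw [e]
    linear_combination (X ^ (b+1) - 1) * qmult_mul_qf a b c

lemma shiftC (a b c : ℕ) :
    qm' a b ((c : ℤ) - 1) * (qf a * qf b * qf c) = (X ^ c - 1) * qf (a + b + c - 1) := by
  rcases c with _ | c
  · have h1 : ((0:ℕ) : ℤ) - 1 = -1 := by norm_num
    rw [h1]
    have h2 : qm' a b (-1) = 0 := by simp [qm']
    rw [h2]
    simp
  · have h1 : ((c+1:ℕ) : ℤ) - 1 = (c : ℤ) := by push_cast; ring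
    rw [h1, qm'_coe, show a + b + (c+1) - 1 = a + b + c from by omega]
    have e : qf (c+1) = (X ^ (c+1) - 1) * qf c := rfl
    rw [e]
    linear_combination (X ^ (c+1) - 1) * qmult_mul_qf a b c

lemma keyI (a b c : ℕ) (h : 1 ≤ a + b + c) :
    qmult a b c = qm' ((a:ℤ) - 1) b c + X ^ a * qm' a ((b:ℤ) - 1) c
      + X ^ (a + b) * qm' a b ((c:ℤ) - 1) := by
  refine mul_right_cancel₀
    (mul_ne_zero (mul_ne_zero (qf_ne_zero a) (qf_ne_zero b)) (qf_ne_zero c)) ?_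
  have h0 := qmult_mul_qf a b c
  have hA := shiftA a b c
  have hB := shiftB a b c
  have hC := shiftC a b c
  have e : qf (a + b + c) = (X ^ (a + b + c) - 1) * qf (a + b + c - 1) := by
    rw [show a + b + c = (a + b + c - 1) + 1 from by omega]
    rfl
  linear_combination h0 - hA - X ^ a * hB - X ^ (a + b) * hC + e

lemma keyII (a b c : ℕ) (h : 1 ≤ a + b + c) :
    qmult a b c = X ^ c * qm' ((a:ℤ) - 1) b c + X ^ (a + c) * qm' a ((b:ℤ) - 1) c
      + qm' a b ((c:ℤ) - 1) := by
  refine mul_right_cancel₀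
    (mul_ne_zero (mul_ne_zero (qf_ne_zero a) (qf_ne_zero b)) (qf_ne_zero c)) ?_
  have h0 := qmult_mul_qf a b c
  have hA := shiftA a b c
  have hB := shiftB a b c
  have hC := shiftC a b c
  have e : qf (a + b + c) = (X ^ (a + b + c) - 1) * qf (a + b + c - 1) := by
    rw [show a + b + c = (a + b + c - 1) + 1 from by omega]
    rfl
  linear_combination h0 - X ^ c * hA - X ^ (a + c) * hB - hC + e

lemma hbb (b : ℕ) : b * (b + 1) = b * (b - 1) + 2 * b := by
  cases b with
  | zero => simp
  | succ b => simp [Nat.succ_sub_one]; ring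

/-- if `c₁†, c₂† : ℤ³ → ℤ[q]` vanish on negative arguments, equal `1` at
`(0,0,0)`, and satisfy the type `A₂⁽²⁾†` recurrences
`c₁†(a,b,c) = q^{2n} c₂†(a-1,b,c) + q^{2n} c₁†(a,b-1,c) + c₁†(a,b,c-1)` and
`c₂†(a,b,c) = c₂†(a-1,b,c) + c₁†(a,b-1,c) + c₁†(a,b,c-1)` with `n = a+b+c ≥ 1`,
then `c₂†(a,b,c) = q^{b(b-1)} · qmultinomial(a+b+c; a,b,c)` evaluated at `q²`. -/
theorem c2_dagger_closed_form
    (c₁ c₂ : ℤ → ℤ → ℤ → Polynomial ℤ)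
    (hneg : ∀ a b c : ℤ, a < 0 ∨ b < 0 ∨ c < 0 → c₁ a b c = 0 ∧ c₂ a b c = 0)
    (hinit : c₁ 0 0 0 = 1 ∧ c₂ 0 0 0 = 1)
    (hrec : ∀ a b c : ℕ, 1 ≤ a + b + c →
      c₁ a b c = X ^ (2 * (a + b + c)) * c₂ ((a : ℤ) - 1) b c
        + X ^ (2 * (a + b + c)) * c₁ a ((b : ℤ) - 1) c
        + c₁ a b ((c : ℤ) - 1) ∧
      c₂ a b c = c₂ ((a : ℤ) - 1) b c
        + c₁ a ((b : ℤ) - 1) c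
        + c₁ a b ((c : ℤ) - 1)) :
    ∀ a b c : ℕ, c₂ a b c = X ^ (b * (b - 1)) * (qmult a b c).comp (X ^ 2) := by
  suffices H : ∀ n : ℕ, ∀ a b c : ℕ, a + b + c = n →
      c₁ a b c = X ^ (2 * a + b * (b + 1)) * (qmult a b c).comp (X ^ 2) ∧
      c₂ a b c = X ^ (b * (b - 1)) * (qmult a b c).comp (X ^ 2) by
    exact fun a b c => (H (a + b + c) a b c rfl).2
  intro n
  induction n using Nat.strong_induction_on with
  | _ n ih =>
    intro a b c hn
    rcases Nat.eq_zero_or_pos n with h0 | hpos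
    · obtain ⟨rfl, rfl, rfl⟩ : a = 0 ∧ b = 0 ∧ c = 0 := by omega
      constructor <;> simp [qmult, qbinom, hinit.1, hinit.2]
    · obtain ⟨hrec1, hrec2⟩ := hrec a b c (by omega)
      have hA : c₂ ((a : ℤ) - 1) b c
          = X ^ (b * (b - 1)) * (qm' ((a:ℤ) - 1) b c).comp (X ^ 2) := by
        rcases a with _ | a
        · simp only [Nat.cast_zero, zero_sub]
          rw [(hneg (-1) b c (Or.inl (by norm_num))).2]
          have : qm' (-1) b c = 0 := by simp [qm']
          rw [this]
          simp
        · rw [show ((a+1:ℕ) : ℤ) - 1 = (a : ℤ) from by push_cast; ring, qm'_coe]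
          exact (ih (a + b + c) (by omega) a b c rfl).2
      have hB : c₁ a ((b : ℤ) - 1) c
          = X ^ (2 * a + (b - 1) * b) * (qm' a ((b:ℤ) - 1) c).comp (X ^ 2) := by
        rcases b with _ | b
        · simp only [Nat.cast_zero, zero_sub]
          rw [(hneg a (-1) c (Or.inr (Or.inl (by norm_num)))).1]
          have : qm' a (-1) c = 0 := by simp [qm']
          rw [this]
          simp
        · rw [show ((b+1:ℕ) : ℤ) - 1 = (b : ℤ) from by push_cast; ring, qm'_coe,
            show (b + 1 - 1) * (b + 1) = b * (b + 1) from by simp]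
          exact (ih (a + b + c) (by omega) a b c rfl).1
      have hC : c₁ a b ((c : ℤ) - 1)
          = X ^ (2 * a + b * (b + 1)) * (qm' a b ((c:ℤ) - 1)).comp (X ^ 2) := by
        rcases c with _ | c
        · simp only [Nat.cast_zero, zero_sub]
          rw [(hneg a b (-1) (Or.inr (Or.inr (by norm_num)))).1]
          have : qm' a b (-1) = 0 := by simp [qm']
          rw [this]
          simp
        · rw [show ((c+1:ℕ) : ℤ) - 1 = (c : ℤ) from by push_cast; ring, qm'_coe]
          exact (ih (a + b + c) (by omega) a b c rfl).1
      have K : (qmult a b c).comp (X ^ 2 : Polynomial ℤ)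
          = (qm' ((a:ℤ) - 1) b c).comp (X ^ 2)
            + X ^ (2 * a) * (qm' a ((b:ℤ) - 1) c).comp (X ^ 2)
            + X ^ (2 * (a + b)) * (qm' a b ((c:ℤ) - 1)).comp (X ^ 2) := by
        rw [keyI a b c (by omega)]
        simp only [add_comp, mul_comp, pow_comp, X_comp, ← pow_mul]
      have K2 : (qmult a b c).comp (X ^ 2 : Polynomial ℤ)
          = X ^ (2 * c) * (qm' ((a:ℤ) - 1) b c).comp (X ^ 2)
            + X ^ (2 * (a + c)) * (qm' a ((b:ℤ) - 1) c).comp (X ^ 2)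
            + (qm' a b ((c:ℤ) - 1)).comp (X ^ 2) := by
        rw [keyII a b c (by omega)]
        simp only [add_comp, mul_comp, pow_comp, X_comp, ← pow_mul]
      constructor
      · rw [hrec1, hA, hB, hC, K2, hbb b]
        ring
      · rw [hrec2, hA, hB, hC, K, hbb b]
        ring
end

section
/- Verification of the c₂ recurrence by the closed form: for k22+k12+k11 = n ≥ 1, q^{k12²}·M(n;k22,k12,k11) = q^{k12²}·M(n-1;k22-1,k12,k11) + q^{2n-1}·q^{(k12-1)²}·M(n-1;k22,k12-1,k11) + q^{k12²+2k22}·M(n-1;k22,k12,k11-1), where M(n;a,b,c) = qmultinomial(n;a,b,c)_{q²} and terms with negative arguments vanish. -/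
open Polynomial

/-- `M(a,b,c) = qmultinomial(a+b+c; a,b,c)` in the variable `q²`, equal to `0`
when some argument is negative. -/
noncomputable def M (a b c : ℤ) : Polynomial ℤ :=
  if 0 ≤ a ∧ 0 ≤ b ∧ 0 ≤ c then (qmult a.toNat b.toNat c.toNat).comp (X ^ 2) else 0

lemma qbinom_zero_right (n : ℕ) : qbinom n 0 = 1 := by cases n <;> rfl

lemma qbinom_eq_zero : ∀ n k, n < k → qbinom n k = 0
  | 0, _+1, _ => rfl
  | n+1, k+1, h => by
      rw [qbinom, qbinom_eq_zero n k (by omega), qbinom_eq_zero n (k+1) (by omega)]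
      ring

/-- The "symmetric" `q`-Pascal rule. -/
lemma pascal' : ∀ m k, qbinom (m+1) (k+1) = X ^ (m-k) * qbinom m k + qbinom m (k+1)
  | 0, 0 => by simp [qbinom]
  | 0, k+1 => by simp [qbinom, qbinom_eq_zero 0 (k+1) (by omega)]
  | m+1, 0 => by
      conv_lhs => rw [qbinom.eq_3, pascal' m 0]
      conv_rhs => rw [qbinom.eq_3]
      simp only [qbinom_zero_right, Nat.sub_zero]
      ring
  | m+1, k+1 => by
      conv_lhs => rw [qbinom.eq_3, pascal' m k, pascal' m (k+1)]
      conv_rhs => rw [qbinom.eq_3, qbinom.eq_3]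
      rcases le_or_gt (k+1) m with hm | hm
      · have e : X ^ (k+1+1) * (X ^ (m-(k+1)) * qbinom m (k+1))
            = X ^ (m+1-(k+1)) * (X ^ (k+1) * qbinom m (k+1)) := by
          rw [← mul_assoc, ← mul_assoc, ← pow_add, ← pow_add]
          congr 2
          omega
        rw [mul_add, e, show m+1-(k+1) = m-k from by omega]
        ring
      · rw [qbinom_eq_zero m (k+1) (by omega), show m+1-(k+1) = m-k from by omega]
        ring

lemma pascal2 (b c : ℕ) : qbinom (b+1+c) (b+1) = X ^ c * qbinom (b+c) b + qbinom (b+c) (b+1) := by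
  rw [show b+1+c = (b+c)+1 from by omega, pascal', show b+c-b = c from by omega]

lemma key : ∀ a b c : ℕ, 1 ≤ a + b + c →
    qmult a b c
      = (if 1 ≤ a then qmult (a-1) b c else 0)
        + X ^ (a + c) * (if 1 ≤ b then qmult a (b-1) c else 0)
        + X ^ a * (if 1 ≤ c then qmult a b (c-1) else 0)
  | 0, 0, 0, h => by omega
  | 0, 0, c+1, _ => by
      simp [qmult, qbinom_zero_right]
  | 0, b+1, c, _ => by
      simp only [qmult, if_pos (show 1 ≤ b+1 by omega), if_neg (show ¬ (1:ℕ) ≤ 0 by omega)]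
      simp only [qbinom_zero_right, one_mul, Nat.add_sub_cancel, pow_zero, zero_add]
      rw [pascal2]
      rcases c with _ | c
      · rw [if_neg (by omega), qbinom_eq_zero (b+0) (b+1) (by omega)]
      · rw [if_pos (by omega), show b+1+(c+1-1) = b+(c+1) from by omega]
  | a+1, 0, c, _ => by
      simp only [qmult, if_pos (show 1 ≤ a+1 by omega), if_neg (show ¬ (1:ℕ) ≤ 0 by omega)]
      simp only [qbinom_zero_right, mul_one, Nat.add_sub_cancel, mul_zero, add_zero]
      rw [show a+1+0+c = (a+0+c)+1 from by omega, qbinom.eq_3]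
      rcases c with _ | c
      · rw [if_neg (by omega), qbinom_eq_zero (a+0+0) (a+1) (by omega)]
      · rw [if_pos (by omega), show a+1+0+(c+1-1) = a+0+(c+1) from by omega,
          show a+0+(c+1) = a+(c+1) from by omega]
  | a+1, b+1, c, _ => by
      simp only [qmult, if_pos (show 1 ≤ a+1 by omega), if_pos (show 1 ≤ b+1 by omega),
        Nat.add_sub_cancel]
      rw [show a+1+(b+1)+c = (a+(b+1)+c)+1 from by omega, qbinom.eq_3, pascal2,
        show a+1+b+c = a+(b+1)+c from by omega]
      rcases c with _ | c
      · rw [if_neg (by omega), qbinom_eq_zero (b+0) (b+1) (by omega)]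
        ring
      · rw [if_pos (by omega), show a+1+(b+1)+(c+1-1) = a+(b+1)+(c+1) from by omega,
          show b+1+(c+1-1) = b+(c+1) from by omega]
        ring

lemma keyC (a b c : ℕ) (h : 1 ≤ a + b + c) :
    (qmult a b c).comp (X ^ 2)
      = (if 1 ≤ a then (qmult (a-1) b c).comp (X ^ 2) else 0)
        + X ^ (2*(a+c)) * (if 1 ≤ b then (qmult a (b-1) c).comp (X ^ 2) else 0)
        + X ^ (2*a) * (if 1 ≤ c then (qmult a b (c-1)).comp (X ^ 2) else 0) := by
  rw [key a b c h]
  simp only [add_comp, mul_comp, X_pow_comp, apply_ite (fun p : Polynomial ℤ => p.comp (X ^ 2)),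
    zero_comp, ← pow_mul]

lemma M_nat (a b c : ℕ) : M a b c = (qmult a b c).comp (X ^ 2) := by simp [M]

lemma M_sub1_left (a b c : ℕ) :
    M ((a:ℤ) - 1) b c = if 1 ≤ a then (qmult (a-1) b c).comp (X ^ 2) else 0 := by
  rcases a with _ | a
  · simp [M]
  · rw [if_pos (by omega), show ((a+1:ℕ):ℤ) - 1 = (a:ℤ) from by push_cast; ring]
    simp [M]

lemma M_sub1_mid (a b c : ℕ) :
    M a ((b:ℤ) - 1) c = if 1 ≤ b then (qmult a (b-1) c).comp (X ^ 2) else 0 := by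
  rcases b with _ | b
  · simp [M]
  · rw [if_pos (by omega), show ((b+1:ℕ):ℤ) - 1 = (b:ℤ) from by push_cast; ring]
    simp [M]

lemma M_sub1_right (a b c : ℕ) :
    M a b ((c:ℤ) - 1) = if 1 ≤ c then (qmult a b (c-1)).comp (X ^ 2) else 0 := by
  rcases c with _ | c
  · simp [M]
  · rw [if_pos (by omega), show ((c+1:ℕ):ℤ) - 1 = (c:ℤ) from by push_cast; ring]
    simp [M]

/-- verification of the `c₂` recurrence by the closed form:
for `k22 + k12 + k11 = n ≥ 1`,
`q^{k12²}·M(k22,k12,k11) = q^{k12²}·M(k22-1,k12,k11)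
 + q^{2n-1}·q^{(k12-1)²}·M(k22,k12-1,k11) + q^{k12²+2k22}·M(k22,k12,k11-1)`. -/
theorem c2_recurrence_closed_form (n k22 k12 k11 : ℕ)
    (h : k22 + k12 + k11 = n) (h1 : 1 ≤ n) :
    X ^ (k12 ^ 2) * M k22 k12 k11
      = X ^ (k12 ^ 2) * M ((k22 : ℤ) - 1) k12 k11
        + X ^ (2 * n - 1) * X ^ ((((k12 : ℤ) - 1) ^ 2).toNat) * M k22 ((k12 : ℤ) - 1) k11
        + X ^ (k12 ^ 2 + 2 * k22) * M k22 k12 ((k11 : ℤ) - 1) := by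
  subst h
  rw [M_nat, M_sub1_left, M_sub1_mid, M_sub1_right, keyC k22 k12 k11 (by omega)]
  rcases k12 with _ | b
  · rw [if_neg (show ¬ (1:ℕ) ≤ 0 by omega)]
    ring
  · rw [show ((((b+1:ℕ):ℤ)) - 1) ^ 2 = ((b^2 : ℕ) : ℤ) from by push_cast; ring,
      Int.toNat_natCast]
    rw [show X ^ (2 * (k22 + (b+1) + k11) - 1) * X ^ (b^2)
        = X ^ ((b+1)^2 + 2*(k22 + k11)) from by
      rw [← pow_add]
      congr 1
      have : (b+1)^2 = b^2 + 2*b + 1 := by ring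
      omega]
    ring
end
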